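/- Let q ≥ 2 be an integer and a an integer with a² ≤ 4q, and let α, β ∈ ℂ be the two roots of x² − ax + q. Let n ≥ 30 be an integer and suppose u is a nonnegative integer with u² = q^n + 1 − (α^n + β^n). Then |u·q^{n/2} − q^n + α^n/2 + β^n/2| < 4.6. -/

import Mathlib

set_option maxHeartbeats 1000000

lemma abs_root_eq_sqrt (q a : ℤ) (hq : 0 ≤ q) (ha : a ^ 2 ≤ 4 * q)
    (α : ℂ) (h : α ^ 2 - (a : ℂ) * α + (q : ℂ) = 0) :
    ‖α‖ = Real.sqrt q := by
  have hre := congrArg Complex.re h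
  have him := congrArg Complex.im h
  simp [Complex.add_re, Complex.add_im, Complex.sub_re, Complex.sub_im,
    Complex.mul_re, Complex.mul_im, pow_two] at hre him
  have hns : Complex.normSq α = (q : ℝ) := by
    have haR : (a : ℝ) ^ 2 ≤ 4 * (q : ℝ) := by exact_mod_cast ha
    rcases eq_or_ne α.im 0 with hy0 | hy0
    · have h4 : (2 * α.re - (a : ℝ)) ^ 2 = (a : ℝ) ^ 2 - 4 * q := by
        linear_combination 4 * hre + 4 * α.im * hy0
      have h0 : (2 * α.re - (a : ℝ)) ^ 2 = 0 := le_antisymm (by linarith) (sq_nonneg _)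
      have hxa : 2 * α.re - (a : ℝ) = 0 := by
        exact pow_eq_zero_iff (by norm_num) |>.mp h0
      simp [Complex.normSq_apply, hy0]
      linear_combination -hre + α.re * hxa - α.im * hy0
    · have hxa : 2 * α.re - (a : ℝ) = 0 := by
        have h' : α.im * (2 * α.re - (a : ℝ)) = 0 := by linear_combination him
        rcases mul_eq_zero.mp h' with h'' | h''
        · exact absurd h'' hy0
        · exact h''
      simp [Complex.normSq_apply]
      linear_combination -hre + α.re * hxa
  rw [Complex.norm_def, hns]

theorem linear_form_small
    (q a : ℤ) (hq : 2 ≤ q) (ha : a ^ 2 ≤ 4 * q)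
    (α β : ℂ) (hsum : α + β = (a : ℂ)) (hprod : α * β = (q : ℂ))
    (n : ℕ) (hn : 30 ≤ n)
    (u : ℕ) (hu : (u : ℂ) ^ 2 = (q : ℂ) ^ n + 1 - (α ^ n + β ^ n)) :
    ‖(u : ℂ) * ((Real.sqrt q : ℝ) : ℂ) ^ n - (q : ℂ) ^ n
      + α ^ n / 2 + β ^ n / 2‖ < 4.6 := by
  have hq0 : (0 : ℤ) ≤ q := by linarith
  have hαr : α ^ 2 - (a : ℂ) * α + (q : ℂ) = 0 := by
    have hβ : β = (a : ℂ) - α := by linear_combination hsum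
    rw [hβ] at hprod
    linear_combination -hprod
  have hβr : β ^ 2 - (a : ℂ) * β + (q : ℂ) = 0 := by
    have hα : α = (a : ℂ) - β := by linear_combination hsum
    rw [hα] at hprod
    linear_combination -hprod
  have habα : ‖α‖ = Real.sqrt q := abs_root_eq_sqrt q a hq0 ha α hαr
  have habβ : ‖β‖ = Real.sqrt q := abs_root_eq_sqrt q a hq0 ha β hβr
  set A : ℝ := Real.sqrt q ^ n with hA
  have hq1 : (1 : ℝ) ≤ (q : ℝ) := by exact_mod_cast (by linarith : (1:ℤ) ≤ q)
  have hsq1 : (1 : ℝ) ≤ Real.sqrt q := by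
    rw [show (1:ℝ) = Real.sqrt 1 by simp]
    exact Real.sqrt_le_sqrt hq1
  have hA1 : (1 : ℝ) ≤ A := one_le_pow₀ hsq1
  have hA2 : A ^ 2 = (q : ℝ) ^ n := by
    rw [hA, ← pow_mul, mul_comm, pow_mul, Real.sq_sqrt (by linarith : (0:ℝ) ≤ q)]
  set S : ℝ := (q : ℝ) ^ n + 1 - (u : ℝ) ^ 2 with hS
  have hSc : α ^ n + β ^ n = ((S : ℝ) : ℂ) := by
    rw [hS]
    push_cast
    linear_combination hu
  have hSbound : |S| ≤ 2 * A := by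
    have h1 : ‖α ^ n + β ^ n‖ ≤ 2 * A := by
      calc ‖α ^ n + β ^ n‖ ≤ ‖α ^ n‖ + ‖β ^ n‖ :=
            norm_add_le _ _
        _ = 2 * A := by rw [norm_pow, norm_pow, habα, habβ, hA]; ring
    calc |S| = ‖((S : ℝ) : ℂ)‖ := by rw [Complex.norm_real, Real.norm_eq_abs]
      _ = ‖α ^ n + β ^ n‖ := by rw [hSc]
      _ ≤ 2 * A := h1
  have hexpr : (u : ℂ) * ((Real.sqrt q : ℝ) : ℂ) ^ n - (q : ℂ) ^ n
      + α ^ n / 2 + β ^ n / 2 = (((u : ℝ) * A - (q : ℝ) ^ n + S / 2 : ℝ) : ℂ) := by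
    rw [hA]
    push_cast
    linear_combination hSc / 2
  rw [hexpr, Complex.norm_real, Real.norm_eq_abs]
  have hu2 : (u : ℝ) ^ 2 = A ^ 2 + 1 - S := by rw [hA2, hS]; ring
  have hun : (0 : ℝ) ≤ (u : ℝ) := Nat.cast_nonneg u
  have hSl : -(2 * A) ≤ S := (abs_le.mp hSbound).1
  have hSu : S ≤ 2 * A := (abs_le.mp hSbound).2
  have hul : A - 1 ≤ (u : ℝ) := by nlinarith [hu2, sq_nonneg ((u : ℝ) + A - 1)]
  have huu : (u : ℝ) ≤ A + 1 := by nlinarith [hu2, sq_nonneg ((u : ℝ) - A - 1)]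
  have key : ((u : ℝ) * A - (q : ℝ) ^ n + S / 2) * ((u : ℝ) + A)
      = A + S * ((u : ℝ) - A) / 2 := by
    rw [← hA2]; linear_combination A * hu2
  have hden : 2 * A - 1 ≤ (u : ℝ) + A := by linarith
  have hdenpos : (0 : ℝ) < (u : ℝ) + A := by linarith
  have hnum1 : S * ((u : ℝ) - A) ≤ 2 * A := by
    nlinarith [mul_nonneg (by linarith : (0:ℝ) ≤ 2*A - S) (by linarith : (0:ℝ) ≤ 1 - ((u:ℝ) - A)),
      mul_nonneg (by linarith : (0:ℝ) ≤ 2*A + S) (by linarith : (0:ℝ) ≤ 1 + ((u:ℝ) - A))]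
  have hnum2 : -(2 * A) ≤ S * ((u : ℝ) - A) := by
    nlinarith [mul_nonneg (by linarith : (0:ℝ) ≤ 2*A - S) (by linarith : (0:ℝ) ≤ 1 + ((u:ℝ) - A)),
      mul_nonneg (by linarith : (0:ℝ) ≤ 2*A + S) (by linarith : (0:ℝ) ≤ 1 - ((u:ℝ) - A))]
  rw [abs_lt]
  constructor
  · nlinarith [key, hnum2, hdenpos, hA1, hden]
  · nlinarith [key, hnum1, hdenpos, hA1, hden]
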